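/- (Correctness of the mechanism in world H.) Assume 0 < P_{ℓH} and P_{ℓL} < 1, and let c = (1/3)·min{T_{ℓh} − P_{ℓH}, T_{ℓℓ} − T_{ℓh}, P_{ℓL} − T_{ℓℓ}, P_{hH} − T_{hh}, T_{hh} − T_{hℓ}, T_{hℓ} − P_{hL}} (which is positive). Let T be an odd positive integer and F, U, K natural numbers with F + U + K = T, 2F < T and 2U < T. Set a_ℓ = (F + K·T_{hℓ})/T and a_h = (F + K·T_{hh})/T. For each k ∈ {0, 1, …, K} let frac(k) = (F + k)/T and let med(k) be the ((T+1)/2)-th smallest element of the multiset consisting of F copies of 0, (K − k) copies of a_ℓ, k copies of a_h, and U copies of 1. Then the probability, for k drawn from the binomial distribution Binomial(K, P_{hH}), that frac(k) ≤ med(k) is at most 2·exp(−2c²K). -/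

import Mathlib

set_option maxHeartbeats 1000000


open scoped ENNReal

/-- Posterior prediction `T_{m'm}` of the fraction of agents receiving signal `m'`,
for an agent who received signal `m`. -/
noncomputable def Tpost (PL PH PmL PmH Pm'L Pm'H : ℝ) : ℝ :=
  (PL * PmL * Pm'L + PH * PmH * Pm'H) / (PL * PmL + PH * PmH)

/-- The constant `c` of equation (3). -/
noncomputable def cconst (PL PH PlL PhL PlH PhH : ℝ) : ℝ :=
  (1 / 3) * min (min (min (Tpost PL PH PhL PhH PlL PlH - PlH)
      (Tpost PL PH PlL PlH PlL PlH - Tpost PL PH PhL PhH PlL PlH))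
    (min (PlL - Tpost PL PH PlL PlH PlL PlH)
      (PhH - Tpost PL PH PhL PhH PhL PhH)))
    (min (Tpost PL PH PhL PhH PhL PhH - Tpost PL PH PlL PlH PhL PhH)
      (Tpost PL PH PlL PlH PhL PhH - PhL))

/-- `med F U K T al ah k` : the `((T+1)/2)`-th smallest element of the multiset consisting of
`F` copies of `0`, `K - k` copies of `al`, `k` copies of `ah` and `U` copies of `1`. -/
noncomputable def medOf (F U K T : ℕ) (al ah : ℝ) (k : ℕ) : ℝ :=
  ((Multiset.replicate F (0 : ℝ) + Multiset.replicate (K - k) al +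
      Multiset.replicate k ah + Multiset.replicate U (1 : ℝ)).sort (· ≤ ·)).getD
    ((T + 1) / 2 - 1) 0

/-- For `x ≥ 0`, `exp (-x) ≤ 1 - x + x²`. -/
lemma exp_neg_le_quad (x : ℝ) (hx : 0 ≤ x) : Real.exp (-x) ≤ 1 - x + x ^ 2 := by
  have h1 : x + 1 ≤ Real.exp x := Real.add_one_le_exp x
  have hpos : (0:ℝ) < 1 + x := by linarith
  rw [Real.exp_neg]
  have h3 : (Real.exp x)⁻¹ ≤ (1 + x)⁻¹ := by
    apply inv_anti₀ hpos; linarith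
  refine h3.trans ?_
  rw [inv_eq_one_div, div_le_iff₀ hpos]
  nlinarith [sq_nonneg x, pow_nonneg hx 3]

/-- Crude bound on the moment generating function of a (centered-ish) Bernoulli. -/
lemma bern_mgf (p lam : ℝ) (hp0 : 0 ≤ p) (hp1 : p ≤ 1) (hl : 0 ≤ lam) :
    (1 - p) + p * Real.exp (-lam) ≤ Real.exp (-(p * lam) + lam ^ 2) := by
  have h1 := exp_neg_le_quad lam hl
  have h3 := Real.add_one_le_exp (-(p * lam) + lam ^ 2)
  nlinarith [sq_nonneg lam, mul_le_mul_of_nonneg_left h1 hp0]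

/-- Chernoff-type bound for the lower tail of the binomial distribution. -/
lemma chernoff_binomial (p a lam : ℝ) (hp0 : 0 ≤ p) (hp1 : p ≤ 1) (hl : 0 ≤ lam) (K : ℕ) :
    (∑ k ∈ Finset.range (K + 1),
        if (k : ℝ) ≤ a then p ^ k * (1 - p) ^ (K - k) * (K.choose k) else 0)
      ≤ Real.exp (lam * a + K * (-(p * lam) + lam ^ 2)) := by
  have hq : (0:ℝ) ≤ 1 - p := by linarith
  have step1 : ∀ k ∈ Finset.range (K + 1),
      (if (k : ℝ) ≤ a then p ^ k * (1 - p) ^ (K - k) * (K.choose k) else 0)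
        ≤ (p * Real.exp (-lam)) ^ k * (1 - p) ^ (K - k) * (K.choose k) * Real.exp (lam * a) := by
    intro k _
    have hterm : (0:ℝ) ≤ p ^ k * (1 - p) ^ (K - k) * (K.choose k) := by positivity
    split
    · next hka =>
      have hE : (1:ℝ) ≤ Real.exp (lam * a + -(lam * k)) := by
        rw [Real.one_le_exp_iff]
        nlinarith
      calc p ^ k * (1 - p) ^ (K - k) * (K.choose k)
          = p ^ k * (1 - p) ^ (K - k) * (K.choose k) * 1 := by ring
        _ ≤ p ^ k * (1 - p) ^ (K - k) * (K.choose k) * Real.exp (lam * a + -(lam * k)) :=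
            mul_le_mul_of_nonneg_left hE hterm
        _ = (p * Real.exp (-lam)) ^ k * (1 - p) ^ (K - k) * (K.choose k) * Real.exp (lam * a) := by
            rw [Real.exp_add, mul_pow, ← Real.exp_nat_mul]
            ring_nf
    · positivity
  refine (Finset.sum_le_sum step1).trans ?_
  rw [← Finset.sum_mul, ← add_pow]
  have hbase : (0:ℝ) ≤ p * Real.exp (-lam) + (1 - p) := by positivity
  have h2 : p * Real.exp (-lam) + (1 - p) ≤ Real.exp (-(p * lam) + lam ^ 2) := by
    have := bern_mgf p lam hp0 hp1 hl; linarith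
  calc (p * Real.exp (-lam) + (1 - p)) ^ K * Real.exp (lam * a)
      ≤ Real.exp (-(p * lam) + lam ^ 2) ^ K * Real.exp (lam * a) := by
        apply mul_le_mul_of_nonneg_right (pow_le_pow_left₀ hbase h2 K) (Real.exp_pos _).le
    _ = Real.exp (lam * a + K * (-(p * lam) + lam ^ 2)) := by
        rw [← Real.exp_nat_mul, ← Real.exp_add]
        ring_nf

/-- The median of the prediction multiset is at most `ah`. -/
lemma medOf_le (F U K T : ℕ) (al ah : ℝ) (k : ℕ)
    (h0 : 0 ≤ al) (hlh : al ≤ ah) (h1 : ah ≤ 1)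
    (hkK : k ≤ K) (hFi : F ≤ (T + 1) / 2 - 1) (hiFK : (T + 1) / 2 - 1 < F + K) :
    medOf F U K T al ah k ≤ ah := by
  set i := (T + 1) / 2 - 1 with hi
  set L := ((List.replicate F (0:ℝ) ++ List.replicate (K - k) al) ++ List.replicate k ah)
      ++ List.replicate U (1:ℝ) with hL
  have hsorted : List.Pairwise (· ≤ ·) L := by
    simp only [hL, List.pairwise_append, List.pairwise_replicate, List.mem_append,
      List.mem_replicate]
    refine ⟨⟨⟨Or.inr le_rfl, Or.inr le_rfl, ?_⟩, Or.inr le_rfl, ?_⟩, Or.inr le_rfl, ?_⟩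
    · rintro a ⟨-, rfl⟩ b ⟨-, rfl⟩; exact h0
    · rintro a (⟨-, rfl⟩ | ⟨-, rfl⟩) b ⟨-, rfl⟩ <;> linarith
    · rintro a ((⟨-, rfl⟩ | ⟨-, rfl⟩) | ⟨-, rfl⟩) b ⟨-, rfl⟩ <;> linarith
  have hperm : ((Multiset.replicate F (0 : ℝ) + Multiset.replicate (K - k) al +
      Multiset.replicate k ah + Multiset.replicate U (1 : ℝ)).sort (· ≤ ·)) = L := by
    apply List.Perm.eq_of_pairwise' (Multiset.pairwise_sort ..) hsorted
    rw [← Multiset.coe_eq_coe, Multiset.sort_eq, hL]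
    simp [← Multiset.coe_replicate]
  unfold medOf
  rw [hperm, hL]
  have hlen3 : (((List.replicate F (0:ℝ) ++ List.replicate (K - k) al) ++
      List.replicate k ah)).length = F + K := by
    simp; omega
  rw [List.getD_append _ _ _ _ (by rw [hlen3]; omega)]
  rcases lt_or_ge i (F + (K - k)) with hcase | hcase
  · rw [List.getD_append _ _ _ _ (by simp; omega)]
    rw [List.getD_append_right _ _ _ _ (by simp; omega)]
    rw [List.getD_eq_getElem _ _ (by simp; omega), List.getElem_replicate]
    exact hlh
  · rw [List.getD_append_right _ _ _ _ (by simp; omega)]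
    rw [List.getD_eq_getElem _ _ (by simp; omega), List.getElem_replicate]

/-- Correctness of the Wisdom-of-the-Crowd-Voting mechanism in world `H`: under truthful play,
the probability (over the binomially distributed number `k` of contingent agents receiving
signal `h`) that the fraction of reported `h` signals does not exceed the median of the
predictions (i.e. that `R` is wrongly announced) is at most `2·exp(−2c²K)`. -/
theorem mechanism_correct_world_H
    (PL PH PlL PhL PlH PhH : ℝ)
    (hPL : 0 < PL) (hPH : 0 < PH) (hP : PL + PH = 1)
    (hPlL0 : 0 ≤ PlL) (hPlL1 : PlL ≤ 1) (hPhL0 : 0 ≤ PhL) (hPhL1 : PhL ≤ 1)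
    (hPlH0 : 0 ≤ PlH) (hPlH1 : PlH ≤ 1) (hPhH0 : 0 ≤ PhH) (hPhH1 : PhH ≤ 1)
    (hsumL : PlL + PhL = 1) (hsumH : PlH + PhH = 1)
    (hcorr : PlH < PlL)
    (hpos : 0 < PlH) (hlt : PlL < 1)
    (T F U K : ℕ) (hT : Odd T) (hTpos : 0 < T)
    (hFUK : F + U + K = T) (hF : 2 * F < T) (hU : 2 * U < T) :
    (∑ k : Fin (K + 1),
        if ((F : ℝ) + (k : ℕ)) / T
            ≤ medOf F U K T (((F : ℝ) + K * Tpost PL PH PlL PlH PhL PhH) / T)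
              (((F : ℝ) + K * Tpost PL PH PhL PhH PhL PhH) / T) k
          then PMF.binomial (Real.toNNReal PhH) (Real.toNNReal_le_one.mpr hPhH1) K k
          else 0)
      ≤ ENNReal.ofReal (2 * Real.exp (-2 * (cconst PL PH PlL PhL PlH PhH) ^ 2 * K)) := by
  have e1 : PhL = 1 - PlL := by linarith
  have e2 : PhH = 1 - PlH := by linarith
  subst e1 e2
  -- basic positivity facts
  have hDl : (0:ℝ) < PL * PlL + PH * PlH :=
    add_pos (mul_pos hPL (hpos.trans hcorr)) (mul_pos hPH hpos)
  have hDh : (0:ℝ) < PL * (1 - PlL) + PH * (1 - PlH) :=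
    add_pos (mul_pos hPL (by linarith)) (mul_pos hPH (by linarith))
  have hsq : (0:ℝ) ≤ PL * PH * (PlL - PlH)^2 :=
    mul_nonneg (mul_nonneg hPL.le hPH.le) (sq_nonneg _)
  -- the six gap inequalities
  have g1 : PlH ≤ Tpost PL PH (1 - PlL) (1 - PlH) PlL PlH := by
    unfold Tpost; rw [le_div_iff₀ hDh]
    nlinarith [mul_nonneg (mul_nonneg hPL.le (by linarith : (0:ℝ) ≤ 1 - PlL))
      (by linarith : (0:ℝ) ≤ PlL - PlH)]
  have g2 : Tpost PL PH (1 - PlL) (1 - PlH) PlL PlH ≤ Tpost PL PH PlL PlH PlL PlH := by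
    unfold Tpost; rw [div_le_div_iff₀ hDh hDl]; nlinarith [hsq]
  have g3 : Tpost PL PH PlL PlH PlL PlH ≤ PlL := by
    unfold Tpost; rw [div_le_iff₀ hDl]
    nlinarith [mul_nonneg (mul_nonneg hPH.le hPlH0) (by linarith : (0:ℝ) ≤ PlL - PlH)]
  have g4 : Tpost PL PH (1 - PlL) (1 - PlH) (1 - PlL) (1 - PlH) ≤ 1 - PlH := by
    unfold Tpost; rw [div_le_iff₀ hDh]
    nlinarith [mul_nonneg (mul_nonneg hPL.le (by linarith : (0:ℝ) ≤ 1 - PlL))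
      (by linarith : (0:ℝ) ≤ PlL - PlH)]
  have g5 : Tpost PL PH PlL PlH (1 - PlL) (1 - PlH)
      ≤ Tpost PL PH (1 - PlL) (1 - PlH) (1 - PlL) (1 - PlH) := by
    unfold Tpost; rw [div_le_div_iff₀ hDl hDh]; nlinarith [hsq]
  have g6 : 1 - PlL ≤ Tpost PL PH PlL PlH (1 - PlL) (1 - PlH) := by
    unfold Tpost; rw [le_div_iff₀ hDl]
    nlinarith [mul_nonneg (mul_nonneg hPH.le hPlH0) (by linarith : (0:ℝ) ≤ PlL - PlH)]
  set Thl := Tpost PL PH PlL PlH (1 - PlL) (1 - PlH) with hThl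
  set Thh := Tpost PL PH (1 - PlL) (1 - PlH) (1 - PlL) (1 - PlH) with hThh
  set c := cconst PL PH PlL (1 - PlL) PlH (1 - PlH) with hc
  -- positivity of c and the gap bound
  have hc0 : 0 ≤ c := by
    rw [hc]; unfold cconst
    have : (0:ℝ) ≤ min (min (min (Tpost PL PH (1-PlL) (1-PlH) PlL PlH - PlH)
        (Tpost PL PH PlL PlH PlL PlH - Tpost PL PH (1-PlL) (1-PlH) PlL PlH))
      (min (PlL - Tpost PL PH PlL PlH PlL PlH)
        ((1-PlH) - Tpost PL PH (1-PlL) (1-PlH) (1-PlL) (1-PlH))))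
      (min (Tpost PL PH (1-PlL) (1-PlH) (1-PlL) (1-PlH) - Tpost PL PH PlL PlH (1-PlL) (1-PlH))
        (Tpost PL PH PlL PlH (1-PlL) (1-PlH) - (1-PlL))) := by
      refine le_min (le_min (le_min ?_ ?_) (le_min ?_ ?_)) (le_min ?_ ?_) <;> linarith
    linarith
  have hgap : Thh ≤ (1 - PlH) - 3 * c := by
    have hM : min (min (min (Tpost PL PH (1-PlL) (1-PlH) PlL PlH - PlH)
        (Tpost PL PH PlL PlH PlL PlH - Tpost PL PH (1-PlL) (1-PlH) PlL PlH))
      (min (PlL - Tpost PL PH PlL PlH PlL PlH)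
        ((1-PlH) - Tpost PL PH (1-PlL) (1-PlH) (1-PlL) (1-PlH))))
      (min (Tpost PL PH (1-PlL) (1-PlH) (1-PlL) (1-PlH) - Tpost PL PH PlL PlH (1-PlL) (1-PlH))
        (Tpost PL PH PlL PlH (1-PlL) (1-PlH) - (1-PlL)))
        ≤ (1-PlH) - Thh :=
      le_trans (le_trans (min_le_left _ _) (min_le_right _ _)) (min_le_right _ _)
    have : c ≤ (1/3) * ((1-PlH) - Thh) := by
      rw [hc]; unfold cconst
      exact mul_le_mul_of_nonneg_left hM (by norm_num)
    linarith
  -- bounds on al and ah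
  have hTR : (0:ℝ) < (T:ℝ) := by exact_mod_cast hTpos
  have hcastT : (F:ℝ) + U + K = T := by exact_mod_cast hFUK
  have hK0 : (0:ℝ) ≤ (K:ℝ) := Nat.cast_nonneg K
  have hF0 : (0:ℝ) ≤ (F:ℝ) := Nat.cast_nonneg F
  have hU0 : (0:ℝ) ≤ (U:ℝ) := Nat.cast_nonneg U
  have hal0 : 0 ≤ ((F : ℝ) + K * Thl) / T :=
    div_nonneg (by nlinarith) hTR.le
  have halh : ((F : ℝ) + K * Thl) / T ≤ ((F : ℝ) + K * Thh) / T := by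
    apply (div_le_div_iff_of_pos_right hTR).mpr
    nlinarith [mul_le_mul_of_nonneg_left g5 hK0]
  have hah1 : ((F : ℝ) + K * Thh) / T ≤ 1 := by
    rw [div_le_one hTR]
    nlinarith [mul_le_mul_of_nonneg_left (show Thh ≤ 1 by linarith) hK0]
  -- index arithmetic
  obtain ⟨j, hj⟩ := hT
  have hFi : F ≤ (T + 1) / 2 - 1 := by omega
  have hiFK : (T + 1) / 2 - 1 < F + K := by omega
  -- rewriting the binomial pmf through `ENNReal.ofReal`
  have hp0 : (0:ℝ) ≤ 1 - PlH := by linarith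
  have hp1 : (1:ℝ) - PlH ≤ 1 := by linarith
  have hq0 : (0:ℝ) ≤ 1 - (1 - PlH) := by linarith
  have hpmf : ∀ k : Fin (K + 1),
      PMF.binomial (Real.toNNReal (1 - PlH)) (Real.toNNReal_le_one.mpr hPhH1) K k
        = ENNReal.ofReal
            ((1 - PlH) ^ (k:ℕ) * (1 - (1 - PlH)) ^ (K - (k:ℕ)) * (K.choose (k:ℕ))) := by
    intro k
    rw [PMF.binomial_apply]
    change ENNReal.ofReal (1 - PlH) ^ _ * (1 - ENNReal.ofReal (1 - PlH)) ^ _ * _ = _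
    rw [Fin.val_last, ENNReal.ofReal_mul (mul_nonneg (pow_nonneg hp0 _) (pow_nonneg hq0 _)),
      ENNReal.ofReal_mul (pow_nonneg hp0 _), ENNReal.ofReal_pow hp0, ENNReal.ofReal_pow hq0,
      ENNReal.ofReal_natCast,
      show ENNReal.ofReal (1 - (1 - PlH)) = 1 - ENNReal.ofReal (1 - PlH) by
        rw [ENNReal.ofReal_sub _ hp0, ENNReal.ofReal_one]]
  set f : ℕ → ℝ := fun n =>
    if (n:ℝ) ≤ (K:ℝ) * Thh then (1 - PlH) ^ n * (1 - (1 - PlH)) ^ (K - n) * (K.choose n) else 0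
    with hf
  have hfnn : ∀ n, 0 ≤ f n := by
    intro n; rw [hf]; dsimp only; split
    · exact mul_nonneg (mul_nonneg (pow_nonneg hp0 _) (pow_nonneg hq0 _)) (Nat.cast_nonneg _)
    · exact le_rfl
  have step1 : ∀ k : Fin (K + 1),
      (if ((F : ℝ) + (k : ℕ)) / T
            ≤ medOf F U K T (((F : ℝ) + K * Thl) / T) (((F : ℝ) + K * Thh) / T) k
          then PMF.binomial (Real.toNNReal (1 - PlH)) (Real.toNNReal_le_one.mpr hPhH1) K k
          else 0)
        ≤ ENNReal.ofReal (f (k:ℕ)) := by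
    intro k
    split
    · next hk =>
      rw [hpmf k]
      apply ENNReal.ofReal_le_ofReal
      have hmed := medOf_le F U K T _ _ (k:ℕ) hal0 halh hah1 (Nat.lt_succ_iff.mp k.isLt) hFi hiFK
      have hkThh : ((k:ℕ):ℝ) ≤ (K:ℝ) * Thh := by
        have h2 : ((F:ℝ) + (k:ℕ)) / T ≤ ((F:ℝ) + K * Thh) / T := hk.trans hmed
        have h3 := (div_le_div_iff_of_pos_right hTR).mp h2
        linarith
      rw [hf]; dsimp only; rw [if_pos hkThh]
    · exact zero_le
  refine le_trans (Finset.sum_le_sum fun k _ => step1 k) ?_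
  rw [← ENNReal.ofReal_sum_of_nonneg (s := (Finset.univ : Finset (Fin (K + 1))))
      (f := fun i : Fin (K + 1) => f (i:ℕ)) (fun i _ => hfnn (i:ℕ)),
    Fin.sum_univ_eq_sum_range (fun n => f n) (K + 1)]
  apply ENNReal.ofReal_le_ofReal
  have h1 := chernoff_binomial (1 - PlH) ((K:ℝ) * Thh) ((3/2) * c) hp0 hp1 (by linarith) K
  have hsum : (∑ n ∈ Finset.range (K + 1), f n)
      = ∑ k ∈ Finset.range (K + 1),
          if (k : ℝ) ≤ (K:ℝ) * Thh
            then (1 - PlH) ^ k * (1 - (1 - PlH)) ^ (K - k) * (K.choose k) else 0 := by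
    rw [hf]
  rw [hsum]
  refine h1.trans ?_
  have hE : (3/2) * c * ((K:ℝ) * Thh)
      + (K:ℝ) * (-((1 - PlH) * ((3/2) * c)) + ((3/2) * c) ^ 2) ≤ -2 * c ^ 2 * K := by
    nlinarith [mul_le_mul_of_nonneg_left (mul_le_mul_of_nonneg_left hgap hK0)
        (by linarith : (0:ℝ) ≤ (3/2) * c),
      mul_nonneg (mul_nonneg hc0 hc0) hK0]
  have h4 := Real.exp_le_exp.mpr hE
  have h5 := Real.exp_pos (-2 * c ^ 2 * (K:ℝ))
  linarith
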